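/- Assume p ∈ (1/2,1). Define G_0 = min{k ≥ 1 : L_k ≠ ∅}, E_1 = min{k ≥ G_0 : L_k = ∅}, and recursively G_i and E_{i+1} as the successive times for L_· to become nonempty and to return to the empty set. Then for every ε > 0 and every n, P( k_n ≥ n^{1/2+ε} ) ≤ P(E_1 − G_0 < n)^{m_n − 1}, where m_n is the integer part of n^{1/2+ε} (and m_n ≥ 2). -/

import Mathlib

open MeasureTheory ProbabilityTheory Filter

noncomputable def evoS {Ω : Type*} (B U : ℕ → Ω → ℝ) (ω : Ω) : ℕ → Finset ℝ
  | 0 => ∅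
  | n + 1 =>
      let S := evoS B U ω n
      if B (n + 1) ω = 1 then insert (U (n + 1) ω) S
      else if h : S.Nonempty then S.erase (S.min' h) else ∅

/-- `L n = S n ∩ (0, f_c)`. -/
noncomputable def evoL {Ω : Type*} (fc : ℝ) (B U : ℕ → Ω → ℝ) (ω : Ω) (n : ℕ) : Finset ℝ :=
  (evoS B U ω n).filter (fun x => 0 < x ∧ x < fc)

/-- `k n = #{2 ≤ k ≤ n : |L (k-1)| = 1 and |L k| = 0}`. -/
noncomputable def evoK {Ω : Type*} (fc : ℝ) (B U : ℕ → Ω → ℝ) (ω : Ω) (n : ℕ) : ℕ :=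
  Set.ncard {k : ℕ | 2 ≤ k ∧ k ≤ n ∧ (evoL fc B U ω (k - 1)).card = 1 ∧ (evoL fc B U ω k).card = 0}

/-- `G₀ = min {k ≥ 1 : L k ≠ ∅}`. -/
noncomputable def evoG0 {Ω : Type*} (fc : ℝ) (B U : ℕ → Ω → ℝ) (ω : Ω) : ℕ :=
  sInf {k : ℕ | 1 ≤ k ∧ evoL fc B U ω k ≠ ∅}

/-- `E₁ = min {k ≥ G₀ : L k = ∅}`. -/
noncomputable def evoE1 {Ω : Type*} (fc : ℝ) (B U : ℕ → Ω → ℝ) (ω : Ω) : ℕ :=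
  sInf {k : ℕ | evoG0 fc B U ω ≤ k ∧ evoL fc B U ω k = ∅}


/-- one step of the reflected walk; `2` = birth into `(0,fc)`, `1` = neutral, `0` = death. -/
def wkStep (c : ℕ) (v : Fin 3) : ℕ := if v = 2 then c + 1 else if v = 1 then c else c - 1

/-- the reflected walk driven by a sign sequence (coordinates `1,2,...`). -/
def wk (f : ℕ → Fin 3) : ℕ → ℕ
  | 0 => 0
  | k + 1 => wkStep (wk f k) (f (k + 1))

/-- the set of "counted" times `j ∈ [2,r]` where the walk goes from `1` to `0`. -/
def cntset (f : ℕ → Fin 3) (r : ℕ) : Finset ℕ :=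
  (Finset.Icc 2 r).filter (fun j => wk f (j - 1) = 1 ∧ wk f j = 0)

def cnt (f : ℕ → Fin 3) (r : ℕ) : ℕ := (cntset f r).card

lemma wk_congr {f g : ℕ → Fin 3} {r : ℕ} (h : ∀ j, 1 ≤ j → j ≤ r → f j = g j) :
    ∀ k, k ≤ r → wk f k = wk g k := by
  intro k
  induction k with
  | zero => intro _; rfl
  | succ k ih =>
      intro hk
      show wkStep (wk f k) (f (k+1)) = wkStep (wk g k) (g (k+1))
      rw [ih (by omega), h (k+1) (by omega) hk]

lemma cntset_congr {f g : ℕ → Fin 3} {r : ℕ} (h : ∀ j, 1 ≤ j → j ≤ r → f j = g j) :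
    cntset f r = cntset g r := by
  unfold cntset
  apply Finset.filter_congr
  intro j hj
  rw [Finset.mem_Icc] at hj
  rw [wk_congr h (j-1) (by omega), wk_congr h j (by omega)]

lemma wk_shift (f : ℕ → Fin 3) (t : ℕ) (ht : wk f t = 0) :
    ∀ i, wk (fun j => f (t + j)) i = wk f (t + i) := by
  intro i
  induction i with
  | zero => simpa [wk] using ht.symm
  | succ i ih =>
      show wkStep (wk (fun j => f (t+j)) i) (f (t + (i+1))) = wk f (t + (i+1))
      rw [ih]
      have : t + (i + 1) = (t + i) + 1 := by omega
      rw [this]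
      rfl

lemma mem_cntset {f : ℕ → Fin 3} {r j : ℕ} :
    j ∈ cntset f r ↔ (2 ≤ j ∧ j ≤ r) ∧ (wk f (j - 1) = 1 ∧ wk f j = 0) := by
  simp [cntset, Finset.mem_Icc]

/-- splitting off the first counted time. -/
lemma cnt_shift_ge {f : ℕ → Fin 3} {r t M : ℕ}
    (ht : t ∈ cntset f r) (hmin : ∀ j ∈ cntset f r, t ≤ j)
    (hcnt : M + 2 ≤ cnt f r) :
    M + 1 ≤ cnt (fun j => f (t + j)) (r - t) := by
  have htm := mem_cntset.1 ht
  have hwt : wk f t = 0 := htm.2.2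
  set g := fun j => f (t + j) with hg
  have hshift := wk_shift f t hwt
  have hsub : ∀ j ∈ (cntset f r).erase t, j - t ∈ cntset g (r - t) := by
    intro j hj
    have hjm := mem_cntset.1 (Finset.mem_of_mem_erase hj)
    have hjt : t < j := lt_of_le_of_ne (hmin j (Finset.mem_of_mem_erase hj))
      (Ne.symm (Finset.ne_of_mem_erase hj))
    have h1 : wk g (j - t - 1) = 1 := by
      have : t + (j - t - 1) = j - 1 := by omega
      rw [hshift, this]; exact hjm.2.1
    have h0 : wk g (j - t) = 0 := by
      have : t + (j - t) = j := by omega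
      rw [hshift, this]; exact hjm.2.2
    have h2 : 2 ≤ j - t := by
      by_contra hc
      have hjt1 : j - t = 1 := by omega
      rw [hjt1] at h1
      simp [wk] at h1
    exact mem_cntset.2 ⟨⟨h2, by omega⟩, h1, h0⟩
  have hinj : M + 1 ≤ ((cntset f r).erase t).card := by
    have := Finset.card_erase_of_mem ht
    unfold cnt at hcnt
    omega
  refine le_trans hinj (Finset.card_le_card_of_injOn (fun j => j - t) hsub ?_)
  intro a ha b hb hab
  have hat : t < a := lt_of_le_of_ne (hmin a (Finset.mem_of_mem_erase ha))
    (Ne.symm (Finset.ne_of_mem_erase ha))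
  have hbt : t < b := lt_of_le_of_ne (hmin b (Finset.mem_of_mem_erase hb))
    (Ne.symm (Finset.ne_of_mem_erase hb))
  simp only at hab
  omega

/-- sign of step `i`. -/
noncomputable def sgn {Ω : Type*} (fc : ℝ) (B U : ℕ → Ω → ℝ) (i : ℕ) (ω : Ω) : Fin 3 :=
  if B i ω = 1 then (if U i ω ∈ Set.Ioo 0 fc then 2 else 1) else 0

def Sv : Fin 3 → Set ℝ := ![{(1:ℝ)}ᶜ, {1}, {1}]

def Tv (fc : ℝ) : Fin 3 → Set ℝ := ![Set.univ, (Set.Ioo 0 fc)ᶜ, Set.Ioo 0 fc]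

lemma measurableSet_Sv (v : Fin 3) : MeasurableSet (Sv v) := by
  fin_cases v <;> simp [Sv]

lemma measurableSet_Tv (fc : ℝ) (v : Fin 3) : MeasurableSet (Tv fc v) := by
  fin_cases v <;> simp [Tv]

lemma sgn_eq_iff {Ω : Type*} (fc : ℝ) (B U : ℕ → Ω → ℝ) (i : ℕ) (v : Fin 3) :
    {ω | sgn fc B U i ω = v} = B i ⁻¹' (Sv v) ∩ U i ⁻¹' (Tv fc v) := by
  ext ω
  unfold sgn
  fin_cases v <;>
    simp only [Sv, Tv, Set.mem_setOf_eq, Set.mem_inter_iff, Set.mem_preimage,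
      Matrix.cons_val_zero, Matrix.cons_val_one, Matrix.head_cons, Set.mem_compl_iff,
      Set.mem_singleton_iff, Set.mem_univ, and_true, Matrix.cons_val_two, Matrix.tail_cons] <;>
    by_cases hb : B i ω = 1 <;> by_cases hu : U i ω ∈ Set.Ioo 0 fc <;>
    simp [hb, hu]

lemma measurable_sgn {Ω : Type*} [MeasurableSpace Ω] (fc : ℝ) (B U : ℕ → Ω → ℝ)
    (hmB : ∀ n, Measurable (B n)) (hmU : ∀ n, Measurable (U n)) (i : ℕ) :
    Measurable (sgn fc B U i) := by
  unfold sgn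
  apply Measurable.ite (hmB i (measurableSet_singleton 1))
  · exact Measurable.ite (hmU i measurableSet_Ioo) measurable_const measurable_const
  · exact measurable_const

/-- the weight of a sign value. -/
noncomputable def wt (p fc : ℝ) (v : Fin 3) : ENNReal :=
  ((ENNReal.ofReal p • Measure.dirac (1 : ℝ) + ENNReal.ofReal (1 - p) • Measure.dirac (0 : ℝ))
      (Sv v)) * ((volume.restrict (Set.Ioo (0 : ℝ) 1)) (Tv fc v))

section Prob

variable {Ω : Type*} [MeasurableSpace Ω] (P : Measure Ω) [IsProbabilityMeasure P]
  (p fc : ℝ) (B U : ℕ → Ω → ℝ)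
  (hmB : ∀ n, Measurable (B n)) (hmU : ∀ n, Measurable (U n))
  (hindep : iIndepFun (Sum.elim B U) P)
  (hBdist : ∀ n, Measure.map (B n) P
    = ENNReal.ofReal p • Measure.dirac (1 : ℝ) + ENNReal.ofReal (1 - p) • Measure.dirac (0 : ℝ))
  (hUdist : ∀ n, Measure.map (U n) P = volume.restrict (Set.Ioo (0 : ℝ) 1))

include hmB hmU hindep hBdist hUdist

lemma cyl (J : Finset ℕ) (v : ℕ → Fin 3) :
    P (⋂ i ∈ J, {ω | sgn fc B U i ω = v i}) = ∏ i ∈ J, wt p fc (v i) := by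
  classical
  have key := hindep.measure_inter_preimage_eq_mul (S := J.disjSum J)
    (sets := Sum.elim (fun i => Sv (v i)) (fun i => Tv fc (v i)))
    (by
      intro k hk
      cases k with
      | inl i => exact measurableSet_Sv _
      | inr i => exact measurableSet_Tv _ _)
  have hset : (⋂ k ∈ J.disjSum J,
      Sum.elim B U k ⁻¹' (Sum.elim (fun i => Sv (v i)) (fun i => Tv fc (v i)) k))
      = ⋂ i ∈ J, {ω | sgn fc B U i ω = v i} := by
    ext ω
    simp only [Set.mem_iInter, Finset.mem_disjSum, sgn_eq_iff fc B U, Set.mem_inter_iff]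
    constructor
    · intro h i hi
      exact ⟨h (Sum.inl i) (Or.inl ⟨i, hi, rfl⟩), h (Sum.inr i) (Or.inr ⟨i, hi, rfl⟩)⟩
    · rintro h k (⟨i, hi, rfl⟩ | ⟨i, hi, rfl⟩)
      · exact (h i hi).1
      · exact (h i hi).2
  rw [← hset, key, Finset.prod_disjSum]
  have hB : ∀ i, P (Sum.elim B U (Sum.inl i) ⁻¹'
      (Sum.elim (fun i => Sv (v i)) (fun i => Tv fc (v i)) (Sum.inl i)))
      = (ENNReal.ofReal p • Measure.dirac (1 : ℝ)
          + ENNReal.ofReal (1 - p) • Measure.dirac (0 : ℝ)) (Sv (v i)) := by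
    intro i
    simp only [Sum.elim_inl]
    rw [← hBdist i, Measure.map_apply (hmB i) (measurableSet_Sv _)]
  have hU : ∀ i, P (Sum.elim B U (Sum.inr i) ⁻¹'
      (Sum.elim (fun i => Sv (v i)) (fun i => Tv fc (v i)) (Sum.inr i)))
      = (volume.restrict (Set.Ioo (0 : ℝ) 1)) (Tv fc (v i)) := by
    intro i
    simp only [Sum.elim_inr]
    rw [← hUdist i, Measure.map_apply (hmU i) (measurableSet_Tv _ _)]
  simp only [hB, hU]
  rw [← Finset.prod_mul_distrib]
  rfl

end Prob

/-- window atom: the signs at times `a+1, ..., a+r` equal `v 1, ..., v r`. -/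
def Wat {Ω : Type*} (fc : ℝ) (B U : ℕ → Ω → ℝ) (a r : ℕ) (v : ℕ → Fin 3) : Set Ω :=
  ⋂ i ∈ Finset.Ioc a (a + r), {ω | sgn fc B U i ω = v (i - a)}

lemma mem_Wat {Ω : Type*} {fc : ℝ} {B U : ℕ → Ω → ℝ} {a r : ℕ} {v : ℕ → Fin 3} {ω : Ω} :
    ω ∈ Wat fc B U a r v ↔ ∀ j, 1 ≤ j → j ≤ r → sgn fc B U (a + j) ω = v j := by
  simp only [Wat, Set.mem_iInter, Finset.mem_Ioc, Set.mem_setOf_eq]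
  constructor
  · intro h j h1 h2
    have := h (a + j) ⟨by omega, by omega⟩
    simpa using this
  · intro h i hi
    have := h (i - a) (by omega) (by omega)
    have hia : a + (i - a) = i := by omega
    rwa [hia] at this

/-- `Q` only depends on coordinates `1, ..., r`. -/
def detr (r : ℕ) (Q : (ℕ → Fin 3) → Prop) : Prop :=
  ∀ f g : ℕ → Fin 3, (∀ j, 1 ≤ j → j ≤ r → f j = g j) → Q f → Q g

/-- the event that the sign pattern starting after time `a` satisfies `Q`. -/
def Ev {Ω : Type*} (fc : ℝ) (B U : ℕ → Ω → ℝ) (a : ℕ) (Q : (ℕ → Fin 3) → Prop) : Set Ω :=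
  {ω | Q (fun j => sgn fc B U (a + j) ω)}

def extv (r : ℕ) (v : Fin r → Fin 3) : ℕ → Fin 3 :=
  fun j => if h : 1 ≤ j ∧ j ≤ r then v ⟨j - 1, by omega⟩ else 0

noncomputable def pats (r : ℕ) (Q : (ℕ → Fin 3) → Prop) : Finset (ℕ → Fin 3) :=
  letI := Classical.decPred Q
  letI : DecidableEq (ℕ → Fin 3) := Classical.decEq _
  (Finset.univ.image (extv r)).filter (fun f => Q f)

lemma extv_eq_of_agree {r : ℕ} {u v : Fin r → Fin 3} {g h : ℕ → Fin 3}
    (hg : g = extv r u) (hh : h = extv r v)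
    (hag : ∀ j, 1 ≤ j → j ≤ r → g j = h j) : g = h := by
  subst hg hh
  funext j
  by_cases hj : 1 ≤ j ∧ j ≤ r
  · exact hag j hj.1 hj.2
  · simp only [extv, dif_neg hj]

lemma Ev_eq_biUnion {Ω : Type*} (fc : ℝ) (B U : ℕ → Ω → ℝ) (a r : ℕ)
    (Q : (ℕ → Fin 3) → Prop) (hQ : detr r Q) :
    Ev fc B U a Q = ⋃ v ∈ pats r Q, Wat fc B U a r v := by
  classical
  ext ω
  simp only [Ev, Set.mem_setOf_eq, Set.mem_iUnion, pats, Finset.mem_filter,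
    Finset.mem_image, Finset.mem_univ, true_and, exists_prop]
  constructor
  · intro hf
    set f : ℕ → Fin 3 := fun j => sgn fc B U (a + j) ω with hfdef
    set u : Fin r → Fin 3 := fun i => f (i.val + 1) with hudef
    have hagree : ∀ j, 1 ≤ j → j ≤ r → f j = extv r u j := by
      intro j h1 h2
      simp only [extv, dif_pos (And.intro h1 h2), hudef]
      congr 1
      omega
    refine ⟨extv r u, ⟨⟨u, rfl⟩, hQ f _ hagree hf⟩, ?_⟩
    rw [mem_Wat]
    intro j h1 h2
    exact hagree j h1 h2
  · rintro ⟨g, ⟨⟨u, rfl⟩, hQg⟩, hωg⟩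
    rw [mem_Wat] at hωg
    exact hQ _ _ (fun j h1 h2 => (hωg j h1 h2).symm) hQg

lemma Wat_disjoint {Ω : Type*} (fc : ℝ) (B U : ℕ → Ω → ℝ) (a r : ℕ)
    {g h : ℕ → Fin 3} (hg : ∃ u, extv r u = g) (hh : ∃ u, extv r u = h)
    (hgh : g ≠ h) : Disjoint (Wat fc B U a r g) (Wat fc B U a r h) := by
  obtain ⟨u, hu⟩ := hg
  obtain ⟨w, hw⟩ := hh
  rw [Set.disjoint_left]
  intro ω hωg hωh
  rw [mem_Wat] at hωg hωh
  exact hgh (extv_eq_of_agree hu.symm hw.symm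
    (fun j h1 h2 => (hωg j h1 h2).symm.trans (hωh j h1 h2)))

lemma measurableSet_Wat {Ω : Type*} [MeasurableSpace Ω] (fc : ℝ) (B U : ℕ → Ω → ℝ)
    (hmB : ∀ n, Measurable (B n)) (hmU : ∀ n, Measurable (U n)) (a r : ℕ) (v : ℕ → Fin 3) :
    MeasurableSet (Wat fc B U a r v) := by
  apply Finset.measurableSet_biInter
  intro i _
  exact measurable_sgn fc B U hmB hmU i (measurableSet_singleton _)

section Prob2

variable {Ω : Type*} [MeasurableSpace Ω] (P : Measure Ω) [IsProbabilityMeasure P]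
  (p fc : ℝ) (B U : ℕ → Ω → ℝ)
  (hmB : ∀ n, Measurable (B n)) (hmU : ∀ n, Measurable (U n))
  (hindep : iIndepFun (Sum.elim B U) P)
  (hBdist : ∀ n, Measure.map (B n) P
    = ENNReal.ofReal p • Measure.dirac (1 : ℝ) + ENNReal.ofReal (1 - p) • Measure.dirac (0 : ℝ))
  (hUdist : ∀ n, Measure.map (U n) P = volume.restrict (Set.Ioo (0 : ℝ) 1))

include hmB hmU hindep hBdist hUdist

lemma P_Wat (a r : ℕ) (v : ℕ → Fin 3) :
    P (Wat fc B U a r v) = ∏ j ∈ Finset.Icc 1 r, wt p fc (v j) := by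
  rw [Wat, cyl P p fc B U hmB hmU hindep hBdist hUdist]
  rw [← Finset.Icc_add_one_left_eq_Ioc]
  have : Finset.Icc (a + 1) (a + r) = (Finset.Icc 1 r).map (addLeftEmbedding a) := by
    rw [Finset.map_add_left_Icc]
  rw [this, Finset.prod_map]
  apply Finset.prod_congr rfl
  intro j _
  simp [addLeftEmbedding]

lemma P_Wat_inter (a t r : ℕ) (v v' : ℕ → Fin 3) :
    P (Wat fc B U a t v ∩ Wat fc B U (a + t) r v')
      = P (Wat fc B U a t v) * P (Wat fc B U (a + t) r v') := by
  classical
  set h : ℕ → Fin 3 := fun i => if i ≤ a + t then v (i - a) else v' (i - (a + t)) with hdef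
  have hset : Wat fc B U a t v ∩ Wat fc B U (a + t) r v'
      = ⋂ i ∈ Finset.Ioc a (a + t + r), {ω | sgn fc B U i ω = h i} := by
    ext ω
    simp only [Set.mem_inter_iff, mem_Wat, Set.mem_iInter, Finset.mem_Ioc, Set.mem_setOf_eq]
    constructor
    · rintro ⟨h1, h2⟩ i hi
      by_cases hit : i ≤ a + t
      · have := h1 (i - a) (by omega) (by omega)
        have hia : a + (i - a) = i := by omega
        rw [hia] at this
        rw [hdef]
        simpa [hit] using this
      · have := h2 (i - (a + t)) (by omega) (by omega)
        have hia : a + t + (i - (a + t)) = i := by omega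
        rw [hia] at this
        rw [hdef]
        simpa [hit] using this
    · intro hh
      constructor
      · intro j h1 h2
        have := hh (a + j) ⟨by omega, by omega⟩
        rw [hdef] at this
        simpa [show a + j ≤ a + t by omega, Nat.add_sub_cancel_left] using this
      · intro j h1 h2
        have := hh (a + t + j) ⟨by omega, by omega⟩
        rw [hdef] at this
        simpa [show ¬ (a + t + j ≤ a + t) by omega, Nat.add_sub_cancel_left] using this
  rw [hset, cyl P p fc B U hmB hmU hindep hBdist hUdist,
    Wat, cyl P p fc B U hmB hmU hindep hBdist hUdist,
    Wat, cyl P p fc B U hmB hmU hindep hBdist hUdist]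
  rw [← Finset.prod_Ioc_consecutive _ (show a ≤ a + t by omega) (show a + t ≤ a + t + r by omega)]
  congr 1
  · apply Finset.prod_congr rfl
    intro i hi
    rw [Finset.mem_Ioc] at hi
    rw [hdef]
    simp [show i ≤ a + t by omega]
  · apply Finset.prod_congr rfl
    intro i hi
    rw [Finset.mem_Ioc] at hi
    rw [hdef]
    simp [show ¬ (i ≤ a + t) by omega]

lemma P_Ev (a r : ℕ) (Q : (ℕ → Fin 3) → Prop) (hQ : detr r Q) :
    P (Ev fc B U a Q) = ∑ v ∈ pats r Q, ∏ j ∈ Finset.Icc 1 r, wt p fc (v j) := by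
  classical
  rw [Ev_eq_biUnion fc B U a r Q hQ]
  rw [measure_biUnion_finset]
  · exact Finset.sum_congr rfl fun v _ => P_Wat P p fc B U hmB hmU hindep hBdist hUdist a r v
  · intro g hg h hh hgh
    simp only [Finset.mem_coe, pats, Finset.mem_filter, Finset.mem_image, Finset.mem_univ,
      true_and] at hg hh
    exact Wat_disjoint fc B U a r hg.1 hh.1 hgh
  · intro v _
    exact measurableSet_Wat fc B U hmB hmU a r v

lemma P_Ev_shift (a b r : ℕ) (Q : (ℕ → Fin 3) → Prop) (hQ : detr r Q) :
    P (Ev fc B U a Q) = P (Ev fc B U b Q) := by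
  rw [P_Ev P p fc B U hmB hmU hindep hBdist hUdist a r Q hQ,
    P_Ev P p fc B U hmB hmU hindep hBdist hUdist b r Q hQ]

lemma P_Ev_inter (a t r : ℕ) (Q Q' : (ℕ → Fin 3) → Prop) (hQ : detr t Q) (hQ' : detr r Q') :
    P (Ev fc B U a Q ∩ Ev fc B U (a + t) Q')
      = P (Ev fc B U a Q) * P (Ev fc B U (a + t) Q') := by
  classical
  rw [Ev_eq_biUnion fc B U a t Q hQ, Ev_eq_biUnion fc B U (a + t) r Q' hQ']
  have hset : (⋃ v ∈ pats t Q, Wat fc B U a t v) ∩ (⋃ u ∈ pats r Q', Wat fc B U (a + t) r u)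
      = ⋃ z ∈ (pats t Q) ×ˢ (pats r Q'), (Wat fc B U a t z.1 ∩ Wat fc B U (a + t) r z.2) := by
    ext ω
    simp only [Set.mem_inter_iff, Set.mem_iUnion, Finset.mem_product, exists_prop]
    constructor
    · rintro ⟨⟨v, hv, hωv⟩, ⟨u, hu, hωu⟩⟩
      exact ⟨(v, u), ⟨hv, hu⟩, hωv, hωu⟩
    · rintro ⟨⟨v, u⟩, ⟨hv, hu⟩, hωv, hωu⟩
      exact ⟨⟨v, hv, hωv⟩, ⟨u, hu, hωu⟩⟩
  rw [hset, measure_biUnion_finset]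
  · have : ∀ z ∈ (pats t Q) ×ˢ (pats r Q'),
        P (Wat fc B U a t z.1 ∩ Wat fc B U (a + t) r z.2)
          = P (Wat fc B U a t z.1) * P (Wat fc B U (a + t) r z.2) := fun z _ =>
      P_Wat_inter P p fc B U hmB hmU hindep hBdist hUdist a t r z.1 z.2
    rw [Finset.sum_congr rfl this, measure_biUnion_finset, measure_biUnion_finset,
      Finset.sum_mul_sum, ← Finset.sum_product']
    · intro g hg h hh hgh
      simp only [Finset.mem_coe, pats, Finset.mem_filter, Finset.mem_image, Finset.mem_univ,
        true_and] at hg hh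
      exact Wat_disjoint fc B U (a + t) r hg.1 hh.1 hgh
    · intro v _; exact measurableSet_Wat fc B U hmB hmU (a + t) r v
    · intro g hg h hh hgh
      simp only [Finset.mem_coe, pats, Finset.mem_filter, Finset.mem_image, Finset.mem_univ,
        true_and] at hg hh
      exact Wat_disjoint fc B U a t hg.1 hh.1 hgh
    · intro v _; exact measurableSet_Wat fc B U hmB hmU a t v
  · rintro ⟨v, u⟩ hz ⟨v', u'⟩ hz' hne
    simp only [Finset.mem_coe, Finset.mem_product, pats, Finset.mem_filter, Finset.mem_image,
      Finset.mem_univ, true_and] at hz hz'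
    by_cases hvv : v = v'
    · subst hvv
      have huu : u ≠ u' := by
        intro h; exact hne (by rw [h])
      exact Disjoint.mono Set.inter_subset_right Set.inter_subset_right
        (Wat_disjoint fc B U (a + t) r hz.2.1 hz'.2.1 huu)
    · exact Disjoint.mono Set.inter_subset_left Set.inter_subset_left
        (Wat_disjoint fc B U a t hz.1.1 hz'.1.1 hvv)
  · rintro ⟨v, u⟩ _
    exact (measurableSet_Wat fc B U hmB hmU a t v).inter
      (measurableSet_Wat fc B U hmB hmU (a + t) r u)

lemma measurableSet_Ev (a r : ℕ) (Q : (ℕ → Fin 3) → Prop) (hQ : detr r Q) :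
    MeasurableSet (Ev fc B U a Q) := by
  rw [Ev_eq_biUnion fc B U a r Q hQ]
  exact (pats r Q).measurableSet_biUnion fun v _ => measurableSet_Wat fc B U hmB hmU a r v

end Prob2

def Qc (m r : ℕ) : (ℕ → Fin 3) → Prop := fun f => m ≤ cnt f r

def Qf (t : ℕ) : (ℕ → Fin 3) → Prop := fun f =>
  (wk f (t - 1) = 1 ∧ wk f t = 0) ∧
    ∀ j, 2 ≤ j → j < t → ¬(wk f (j - 1) = 1 ∧ wk f j = 0)

lemma detr_Qc (m r : ℕ) : detr r (Qc m r) := by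
  intro f g hag h
  unfold Qc cnt at *
  rwa [← cntset_congr hag]

lemma detr_Qf (t : ℕ) : detr t (Qf t) := by
  intro f g hag h
  obtain ⟨⟨h1, h0⟩, hmin⟩ := h
  refine ⟨⟨?_, ?_⟩, ?_⟩
  · rw [← wk_congr hag (t - 1) (by omega)]; exact h1
  · rw [← wk_congr hag t le_rfl]; exact h0
  · intro j h2 hjt hc
    refine hmin j h2 hjt ?_
    rw [wk_congr hag (j - 1) (by omega), wk_congr hag j (by omega)]
    exact hc

section Prob3

variable {Ω : Type*} [MeasurableSpace Ω] (P : Measure Ω) [IsProbabilityMeasure P]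
  (p fc : ℝ) (B U : ℕ → Ω → ℝ)
  (hmB : ∀ n, Measurable (B n)) (hmU : ∀ n, Measurable (U n))
  (hindep : iIndepFun (Sum.elim B U) P)
  (hBdist : ∀ n, Measure.map (B n) P
    = ENNReal.ofReal p • Measure.dirac (1 : ℝ) + ENNReal.ofReal (1 - p) • Measure.dirac (0 : ℝ))
  (hUdist : ∀ n, Measure.map (U n) P = volume.restrict (Set.Ioo (0 : ℝ) 1))

include hmB hmU hindep hBdist hUdist

lemma main_ind (n : ℕ) :
    ∀ (M a r : ℕ), r ≤ n →
      P (Ev fc B U a (Qc (M + 1) r)) ≤ (P (Ev fc B U 0 (Qc 1 n))) ^ M := by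
  intro M
  induction M with
  | zero =>
      intro a r _
      simpa using prob_le_one
  | succ M ih =>
      intro a r hrn
      have hincl : Ev fc B U a (Qc (M + 1 + 1) r) ⊆
          ⋃ t ∈ Finset.Icc 2 r,
            (Ev fc B U a (Qf t) ∩ Ev fc B U (a + t) (Qc (M + 1) (r - t))) := by
        intro ω hω
        set f : ℕ → Fin 3 := fun j => sgn fc B U (a + j) ω with hf
        have hQ : M + 2 ≤ cnt f r := hω
        have hne : (cntset f r).Nonempty := by
          rw [← Finset.card_pos]; unfold cnt at hQ; omega
        set t := (cntset f r).min' hne with htdef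
        have htmem : t ∈ cntset f r := (cntset f r).min'_mem hne
        have htm := mem_cntset.1 htmem
        have hmin : ∀ j ∈ cntset f r, t ≤ j := fun j hj => Finset.min'_le _ j hj
        simp only [Set.mem_iUnion, exists_prop]
        refine ⟨t, Finset.mem_Icc.2 ⟨htm.1.1, htm.1.2⟩, ?_, ?_⟩
        · refine ⟨htm.2, ?_⟩
          intro j h2 hjt hcj
          have hjmem : j ∈ cntset f r := mem_cntset.2 ⟨⟨h2, by omega⟩, hcj⟩
          have := hmin j hjmem
          omega
        · show Qc (M + 1) (r - t) (fun j => sgn fc B U (a + t + j) ω)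
          have hfun : (fun j => sgn fc B U (a + t + j) ω) = fun j => f (t + j) := by
            funext j; rw [hf]; congr 1; omega
          rw [hfun]
          exact cnt_shift_ge htmem hmin hQ
      have hdisj : (↑(Finset.Icc 2 r) : Set ℕ).PairwiseDisjoint
          (fun t => Ev fc B U a (Qf t)) := by
        have key : ∀ t t', 2 ≤ t → t < t' →
            ∀ ω, ω ∈ Ev fc B U a (Qf t) → ω ∈ Ev fc B U a (Qf t') → False := by
          intro t t' h2 htt ω hω hω'
          exact hω'.2 t h2 htt hω.1
        intro t ht t' ht' htt
        simp only [Finset.mem_coe, Finset.mem_Icc] at ht ht'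
        rcases lt_or_gt_of_ne htt with h | h
        · exact Set.disjoint_left.2 fun ω hω hω' => key t t' ht.1 h ω hω hω'
        · exact Set.disjoint_right.2 fun ω hω hω' => key t' t ht'.1 h ω hω hω'
      have hsum_le : ∑ t ∈ Finset.Icc 2 r, P (Ev fc B U a (Qf t))
          ≤ P (Ev fc B U 0 (Qc 1 n)) := by
        rw [← measure_biUnion_finset hdisj
          (fun t _ => measurableSet_Ev P p fc B U hmB hmU hindep hBdist hUdist a t (Qf t)
            (detr_Qf t))]
        have hsub : (⋃ t ∈ Finset.Icc 2 r, Ev fc B U a (Qf t)) ⊆ Ev fc B U a (Qc 1 n) := by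
          intro ω hω
          simp only [Set.mem_iUnion, exists_prop] at hω
          obtain ⟨t, htr, hωt⟩ := hω
          rw [Finset.mem_Icc] at htr
          have htmem : t ∈ cntset (fun j => sgn fc B U (a + j) ω) n :=
            mem_cntset.2 ⟨⟨htr.1, by omega⟩, hωt.1⟩
          show 1 ≤ cnt (fun j => sgn fc B U (a + j) ω) n
          have : (cntset (fun j => sgn fc B U (a + j) ω) n).Nonempty := ⟨t, htmem⟩
          rw [← Finset.card_pos] at this
          exact this
        refine le_trans (measure_mono hsub) (le_of_eq ?_)
        exact P_Ev_shift P p fc B U hmB hmU hindep hBdist hUdist a 0 n (Qc 1 n) (detr_Qc 1 n)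
      calc P (Ev fc B U a (Qc (M + 1 + 1) r))
          ≤ ∑ t ∈ Finset.Icc 2 r,
              P (Ev fc B U a (Qf t) ∩ Ev fc B U (a + t) (Qc (M + 1) (r - t))) :=
            le_trans (measure_mono hincl) (measure_biUnion_finset_le _ _)
        _ = ∑ t ∈ Finset.Icc 2 r,
              P (Ev fc B U a (Qf t)) * P (Ev fc B U (a + t) (Qc (M + 1) (r - t))) :=
            Finset.sum_congr rfl fun t _ =>
              P_Ev_inter P p fc B U hmB hmU hindep hBdist hUdist a t (r - t) (Qf t)
                (Qc (M + 1) (r - t)) (detr_Qf t) (detr_Qc (M + 1) (r - t))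
        _ ≤ ∑ t ∈ Finset.Icc 2 r,
              P (Ev fc B U a (Qf t)) * (P (Ev fc B U 0 (Qc 1 n))) ^ M :=
            Finset.sum_le_sum fun t _ =>
              mul_le_mul_right (ih (a + t) (r - t) (by omega)) _
        _ = (∑ t ∈ Finset.Icc 2 r, P (Ev fc B U a (Qf t)))
              * (P (Ev fc B U 0 (Qc 1 n))) ^ M := (Finset.sum_mul _ _ _).symm
        _ ≤ P (Ev fc B U 0 (Qc 1 n)) * (P (Ev fc B U 0 (Qc 1 n))) ^ M :=
            mul_le_mul_left hsum_le _
        _ = (P (Ev fc B U 0 (Qc 1 n))) ^ (M + 1) := by rw [pow_succ, mul_comm]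

end Prob3

lemma evoS_subset {Ω : Type*} (B U : ℕ → Ω → ℝ) (ω : Ω) :
    ∀ k, evoS B U ω k ⊆ (Finset.Icc 1 k).image (fun j => U j ω) := by
  intro k
  induction k with
  | zero => simp [evoS]
  | succ k ih =>
      rw [evoS]
      by_cases hb : B (k + 1) ω = 1
      · rw [if_pos hb]
        intro x hx
        rcases Finset.mem_insert.1 hx with hx | hx
        · subst hx
          exact Finset.mem_image.2 ⟨k + 1, Finset.mem_Icc.2 ⟨by omega, le_rfl⟩, rfl⟩
        · exact Finset.image_subset_image (Finset.Icc_subset_Icc_right (by omega)) (ih hx)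
      · rw [if_neg hb]
        by_cases hS : (evoS B U ω k).Nonempty
        · rw [dif_pos hS]
          intro x hx
          exact Finset.image_subset_image (Finset.Icc_subset_Icc_right (by omega))
            (ih (Finset.mem_of_mem_erase hx))
        · rw [dif_neg hS]
          intro x hx
          simp at hx

lemma card_evoL {Ω : Type*} (fc : ℝ) (B U : ℕ → Ω → ℝ) (ω : Ω)
    (hU1 : ∀ i, U i ω ∈ Set.Ioo (0 : ℝ) 1)
    (hUd : ∀ i j, i ≠ j → U i ω ≠ U j ω) :
    ∀ k, (evoL fc B U ω k).card = wk (fun j => sgn fc B U j ω) k := by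
  intro k
  induction k with
  | zero => simp [evoL, evoS, wk]
  | succ k ih =>
      set f : ℕ → Fin 3 := fun j => sgn fc B U j ω with hf
      show (evoL fc B U ω (k + 1)).card = wkStep (wk f k) (f (k + 1))
      unfold evoL
      rw [evoS]
      by_cases hb : B (k + 1) ω = 1
      · rw [if_pos hb]
        by_cases hu : U (k + 1) ω ∈ Set.Ioo 0 fc
        · have hfk : f (k + 1) = 2 := by
            rw [hf]; show sgn fc B U (k+1) ω = 2; unfold sgn; rw [if_pos hb, if_pos hu]
          have hpred : 0 < U (k + 1) ω ∧ U (k + 1) ω < fc := Set.mem_Ioo.1 hu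
          rw [Finset.filter_insert, if_pos hpred]
          have hnot : U (k + 1) ω ∉ Finset.filter (fun x => 0 < x ∧ x < fc) (evoS B U ω k) := by
            intro hmem
            have hmem' := Finset.mem_of_mem_filter _ hmem
            have := evoS_subset B U ω k hmem'
            rcases Finset.mem_image.1 this with ⟨j, hj, hje⟩
            rw [Finset.mem_Icc] at hj
            exact hUd j (k + 1) (by omega) hje
          rw [Finset.card_insert_of_notMem hnot, hfk]
          unfold wkStep
          rw [if_pos rfl]
          rw [← ih]
          rfl
        · have hfk : f (k + 1) = 1 := by
            rw [hf]; show sgn fc B U (k+1) ω = 1; unfold sgn; rw [if_pos hb, if_neg hu]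
          have hpred : ¬ (0 < U (k + 1) ω ∧ U (k + 1) ω < fc) := by
            rw [← Set.mem_Ioo]; exact hu
          rw [Finset.filter_insert, if_neg hpred, hfk]
          unfold wkStep
          rw [if_neg (by decide), if_pos rfl]
          exact ih
      · rw [if_neg hb]
        have hfk : f (k + 1) = 0 := by
          simp [hf, sgn, hb]
        rw [hfk]
        unfold wkStep
        rw [if_neg (by decide), if_neg (by decide)]
        by_cases hS : (evoS B U ω k).Nonempty
        · rw [dif_pos hS]
          set m := (evoS B U ω k).min' hS with hm
          rw [Finset.filter_erase]
          by_cases hL : (Finset.filter (fun x => 0 < x ∧ x < fc) (evoS B U ω k)).card = 0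
          · rw [Finset.card_eq_zero] at hL
            rw [hL]
            simp only [Finset.erase_empty, Finset.card_empty]
            rw [← ih]
            unfold evoL
            rw [hL]
            simp
          · have hLpos : 0 < (Finset.filter (fun x => 0 < x ∧ x < fc) (evoS B U ω k)).card := by
              omega
            rw [Finset.card_pos] at hLpos
            obtain ⟨x, hx⟩ := hLpos
            have hxm := Finset.mem_filter.1 hx
            have hmmem : m ∈ evoS B U ω k := (evoS B U ω k).min'_mem hS
            have hm0 : 0 < m := by
              have := evoS_subset B U ω k hmmem
              rcases Finset.mem_image.1 this with ⟨j, _, hje⟩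
              have := hU1 j
              rw [hje] at this
              exact this.1
            have hmfc : m < fc := lt_of_le_of_lt ((evoS B U ω k).min'_le x hxm.1) hxm.2.2
            have hmL : m ∈ Finset.filter (fun x => 0 < x ∧ x < fc) (evoS B U ω k) :=
              Finset.mem_filter.2 ⟨hmmem, hm0, hmfc⟩
            rw [Finset.card_erase_of_mem hmL, ← ih]
            rfl
        · rw [dif_neg hS]
          rw [Finset.not_nonempty_iff_eq_empty] at hS
          have hL0 : (evoL fc B U ω k).card = 0 := by
            unfold evoL
            rw [hS]
            simp
          rw [← ih, hL0]
          simp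

lemma evoK_eq {Ω : Type*} (fc : ℝ) (B U : ℕ → Ω → ℝ) (ω : Ω)
    (hU1 : ∀ i, U i ω ∈ Set.Ioo (0 : ℝ) 1)
    (hUd : ∀ i j, i ≠ j → U i ω ≠ U j ω) (n : ℕ) :
    evoK fc B U ω n = cnt (fun j => sgn fc B U j ω) n := by
  unfold evoK cnt
  have hset : {k : ℕ | 2 ≤ k ∧ k ≤ n ∧ (evoL fc B U ω (k - 1)).card = 1
      ∧ (evoL fc B U ω k).card = 0}
      = ↑(cntset (fun j => sgn fc B U j ω) n) := by
    ext k
    simp only [Set.mem_setOf_eq, Finset.coe_filter, cntset, Finset.mem_Icc,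
      card_evoL fc B U ω hU1 hUd]
    constructor
    · rintro ⟨h1, h2, h3, h4⟩
      exact ⟨⟨h1, h2⟩, by simpa using h3, by simpa using h4⟩
    · rintro ⟨⟨h1, h2⟩, h3, h4⟩
      exact ⟨h1, h2, by simpa using h3, by simpa using h4⟩
  rw [hset, Set.ncard_coe_finset]

lemma exc_lt {Ω : Type*} (fc : ℝ) (B U : ℕ → Ω → ℝ) (ω : Ω)
    (hU1 : ∀ i, U i ω ∈ Set.Ioo (0 : ℝ) 1)
    (hUd : ∀ i j, i ≠ j → U i ω ≠ U j ω) (n j : ℕ)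
    (hj : j ∈ cntset (fun i => sgn fc B U i ω) n) :
    evoE1 fc B U ω - evoG0 fc B U ω < n := by
  have hm := mem_cntset.1 hj
  have hc1 : (evoL fc B U ω (j - 1)).card = 1 := by
    rw [card_evoL fc B U ω hU1 hUd]; exact hm.2.1
  have hc0 : (evoL fc B U ω j).card = 0 := by
    rw [card_evoL fc B U ω hU1 hUd]; exact hm.2.2
  have hne : evoL fc B U ω (j - 1) ≠ ∅ := by
    intro h; rw [h] at hc1; simp at hc1
  have hGmem : j - 1 ∈ {k : ℕ | 1 ≤ k ∧ evoL fc B U ω k ≠ ∅} := ⟨by omega, hne⟩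
  have hG_le : evoG0 fc B U ω ≤ j - 1 := Nat.sInf_le hGmem
  have hG_ge : 1 ≤ evoG0 fc B U ω := (Nat.sInf_mem (Set.nonempty_of_mem hGmem)).1
  have hE_le : evoE1 fc B U ω ≤ j :=
    Nat.sInf_le ⟨by omega, Finset.card_eq_zero.1 hc0⟩
  omega

lemma Dset_compl_null {Ω : Type*} [MeasurableSpace Ω] (P : Measure Ω) [IsProbabilityMeasure P]
    (B U : ℕ → Ω → ℝ)
    (hmU : ∀ n, Measurable (U n))
    (hindep : iIndepFun (Sum.elim B U) P)
    (hUdist : ∀ n, Measure.map (U n) P = volume.restrict (Set.Ioo (0 : ℝ) 1)) :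
    P {ω | ¬ ((∀ i, U i ω ∈ Set.Ioo (0 : ℝ) 1) ∧ (∀ i j, i ≠ j → U i ω ≠ U j ω))} = 0 := by
  have hsub : {ω | ¬ ((∀ i, U i ω ∈ Set.Ioo (0 : ℝ) 1) ∧ (∀ i j, i ≠ j → U i ω ≠ U j ω))}
      ⊆ (⋃ i, U i ⁻¹' (Set.Ioo (0 : ℝ) 1)ᶜ)
        ∪ ⋃ q : ℕ × ℕ, {ω | q.1 ≠ q.2 ∧ U q.1 ω = U q.2 ω} := by
    intro ω hω
    simp only [Set.mem_setOf_eq, not_and_or, not_forall] at hω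
    rcases hω with ⟨i, hi⟩ | ⟨i, j, hij, hUij⟩
    · exact Or.inl (Set.mem_iUnion.2 ⟨i, hi⟩)
    · refine Or.inr (Set.mem_iUnion.2 ⟨(i, j), hij, ?_⟩)
      simpa using hUij
  refine measure_mono_null hsub (measure_union_null ?_ ?_)
  · refine measure_iUnion_null fun i => ?_
    have : P (U i ⁻¹' (Set.Ioo (0 : ℝ) 1)ᶜ)
        = (Measure.map (U i) P) (Set.Ioo (0 : ℝ) 1)ᶜ :=
      (Measure.map_apply (hmU i) measurableSet_Ioo.compl).symm
    rw [this, hUdist i, Measure.restrict_apply measurableSet_Ioo.compl]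
    simp
  · refine measure_iUnion_null fun q => ?_
    obtain ⟨i, j⟩ := q
    by_cases hij : i = j
    · subst hij
      have : {ω : Ω | i ≠ i ∧ U i ω = U i ω} = ∅ := by
        ext ω; simp
      rw [this]
      simp
    · refine measure_mono_null (fun ω hω => hω.2) ?_
      show P {ω : Ω | U i ω = U j ω} = 0
      have hind : IndepFun (U i) (U j) P :=
        hindep.indepFun (show (Sum.inr i : ℕ ⊕ ℕ) ≠ Sum.inr j by simp [hij])
      have hmap := (indepFun_iff_map_prod_eq_prod_map_map
        (hmU i).aemeasurable (hmU j).aemeasurable).1 hind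
      have hdiag : MeasurableSet {x : ℝ × ℝ | x.1 = x.2} :=
        measurableSet_eq_fun measurable_fst measurable_snd
      have hpre : {ω : Ω | U i ω = U j ω}
          = (fun ω => (U i ω, U j ω)) ⁻¹' {x : ℝ × ℝ | x.1 = x.2} := rfl
      rw [hpre, ← Measure.map_apply ((hmU i).prodMk (hmU j)) hdiag, hmap,
        hUdist i, hUdist j]
      set μ := volume.restrict (Set.Ioo (0 : ℝ) 1) with hμ
      rw [Measure.prod_apply hdiag]
      have hzero : ∀ x : ℝ, μ (Prod.mk x ⁻¹' {x : ℝ × ℝ | x.1 = x.2}) = 0 := by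
        intro x
        have : (Prod.mk x ⁻¹' {x : ℝ × ℝ | x.1 = x.2}) = {x} := by
          ext y; simp [eq_comm]
        rw [this, hμ, Measure.restrict_apply (measurableSet_singleton x)]
        exact measure_mono_null Set.inter_subset_left (measure_singleton x)
      simp [hzero]

/-- `P(k_n ≥ n^(1/2+ε)) ≤ P(E₁ − G₀ < n)^(m_n − 1)`, where `m_n = ⌊n^(1/2+ε)⌋ ≥ 2`. -/
theorem stmt10 {Ω : Type*} [MeasurableSpace Ω] (P : Measure Ω) [IsProbabilityMeasure P]
    (p : ℝ) (hp : 1 / 2 < p) (hp1 : p < 1)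
    (B U : ℕ → Ω → ℝ)
    (hmB : ∀ n, Measurable (B n)) (hmU : ∀ n, Measurable (U n))
    (hB01 : ∀ n ω, B n ω = 0 ∨ B n ω = 1)
    (hindep : iIndepFun (Sum.elim B U) P)
    (hBdist : ∀ n, Measure.map (B n) P
      = ENNReal.ofReal p • Measure.dirac (1 : ℝ) + ENNReal.ofReal (1 - p) • Measure.dirac (0 : ℝ))
    (hUdist : ∀ n, Measure.map (U n) P = volume.restrict (Set.Ioo (0 : ℝ) 1))
    (ε : ℝ) (hε : 0 < ε) (n : ℕ)
    (hm : 2 ≤ Nat.floor ((n : ℝ) ^ ((1 : ℝ) / 2 + ε))) :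
    P {ω | (n : ℝ) ^ ((1 : ℝ) / 2 + ε) ≤ (evoK ((1 - p) / p) B U ω n : ℝ)}
      ≤ (P {ω | evoE1 ((1 - p) / p) B U ω - evoG0 ((1 - p) / p) B U ω < n})
          ^ (Nat.floor ((n : ℝ) ^ ((1 : ℝ) / 2 + ε)) - 1) := by
  set fc := (1 - p) / p with hfc
  set m := Nat.floor ((n : ℝ) ^ ((1 : ℝ) / 2 + ε)) with hmdef
  have hexp : (0 : ℝ) < (1 : ℝ) / 2 + ε := by linarith
  have hn1 : 1 ≤ n := by
    by_contra h
    have hn0 : n = 0 := by omega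
    rw [hn0] at hmdef
    rw [hmdef] at hm
    norm_num [Real.zero_rpow (ne_of_gt hexp)] at hm
  set D : Set Ω :=
    {ω | (∀ i, U i ω ∈ Set.Ioo (0 : ℝ) 1) ∧ (∀ i j, i ≠ j → U i ω ≠ U j ω)} with hD
  have hD0 : P Dᶜ = 0 := by
    have := Dset_compl_null P B U hmU hindep hUdist
    rw [hD]
    rw [Set.compl_setOf]
    exact this
  have hfun0 : ∀ ω : Ω, (fun j => sgn fc B U (0 + j) ω) = fun j => sgn fc B U j ω := by
    intro ω; funext j; rw [zero_add]
  -- Step A : inclusion of the LHS event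
  have hsubA : {ω | (n : ℝ) ^ ((1 : ℝ) / 2 + ε) ≤ (evoK fc B U ω n : ℝ)}
      ⊆ Ev fc B U 0 (Qc m n) ∪ Dᶜ := by
    intro ω hω
    by_cases hωD : ω ∈ D
    · left
      have hge : m ≤ evoK fc B U ω n := by
        have h1 : (m : ℝ) ≤ (n : ℝ) ^ ((1 : ℝ) / 2 + ε) :=
          Nat.floor_le (Real.rpow_nonneg (Nat.cast_nonneg n) _)
        exact_mod_cast le_trans h1 hω
      show Qc m n (fun j => sgn fc B U (0 + j) ω)
      rw [hfun0 ω]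
      show m ≤ cnt (fun j => sgn fc B U j ω) n
      rw [← evoK_eq fc B U ω hωD.1 hωD.2 n]
      exact hge
    · exact Or.inr hωD
  -- Step D : the excursion event
  have hsubD : Ev fc B U 0 (Qc 1 n)
      ⊆ {ω | evoE1 fc B U ω - evoG0 fc B U ω < n} ∪ Dᶜ := by
    intro ω hω
    by_cases hωD : ω ∈ D
    · left
      have hω' : Qc 1 n (fun j => sgn fc B U (0 + j) ω) := hω
      rw [hfun0 ω] at hω'
      have hne : (cntset (fun j => sgn fc B U j ω) n).Nonempty := by
        rw [← Finset.card_pos]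
        exact hω'
      obtain ⟨j, hj⟩ := hne
      exact exc_lt fc B U ω hωD.1 hωD.2 n j hj
    · exact Or.inr hωD
  have hxD : P (Ev fc B U 0 (Qc 1 n))
      ≤ P {ω | evoE1 fc B U ω - evoG0 fc B U ω < n} := by
    calc P (Ev fc B U 0 (Qc 1 n))
        ≤ P ({ω | evoE1 fc B U ω - evoG0 fc B U ω < n} ∪ Dᶜ) := measure_mono hsubD
      _ ≤ P {ω | evoE1 fc B U ω - evoG0 fc B U ω < n} + P Dᶜ := measure_union_le _ _
      _ = P {ω | evoE1 fc B U ω - evoG0 fc B U ω < n} := by rw [hD0, add_zero]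
  have hmain : P (Ev fc B U 0 (Qc m n)) ≤ (P (Ev fc B U 0 (Qc 1 n))) ^ (m - 1) := by
    have hm1 : m = (m - 1) + 1 := by omega
    rw [hm1]
    have := main_ind P p fc B U hmB hmU hindep hBdist hUdist n (m - 1) 0 n le_rfl
    simpa using this
  calc P {ω | (n : ℝ) ^ ((1 : ℝ) / 2 + ε) ≤ (evoK fc B U ω n : ℝ)}
      ≤ P (Ev fc B U 0 (Qc m n) ∪ Dᶜ) := measure_mono hsubA
    _ ≤ P (Ev fc B U 0 (Qc m n)) + P Dᶜ := measure_union_le _ _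
    _ = P (Ev fc B U 0 (Qc m n)) := by rw [hD0, add_zero]
    _ ≤ (P (Ev fc B U 0 (Qc 1 n))) ^ (m - 1) := hmain
    _ ≤ (P {ω | evoE1 fc B U ω - evoG0 fc B U ω < n}) ^ (m - 1) :=
        pow_le_pow_left₀ (zero_le) hxD _
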